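/- Let f = (1/n)∑_{i=1}^n f_i with each f_i convex differentiable with L-Lipschitz gradient and x* a minimizer of f. For any x, with i uniform on {1,...,n} and v_i := −[∇f_i(x) − ∇f_i(x̃) + ∇f(x̃)], we have E_i[‖v_i‖²] ≤ 4L[f(x) − f(x*) + f(x̃) − f(x*)]. -/

import Mathlib

open Finset RealInnerProductSpace

variable {E : Type*} [NormedAddCommGroup E] [InnerProductSpace ℝ E] [CompleteSpace E]

lemma line_hasDerivAt (g : E → ℝ) (G : E → E) (hg : ∀ z, HasGradientAt g (G z) z)
    (a b : E) (t : ℝ) :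
    HasDerivAt (fun s : ℝ => g (a + s • (b - a))) ⟪G (a + t • (b - a)), b - a⟫ t := by
  have hc : HasDerivAt (fun s : ℝ => a + s • (b - a)) (b - a) t := by
    simpa using ((hasDerivAt_id t).smul_const (b - a)).const_add a
  have hF : HasFDerivAt g (InnerProductSpace.toDual ℝ E (G (a + t • (b - a))))
      (a + t • (b - a)) := hasGradientAt_iff_hasFDerivAt.mp (hg _)
  simpa [InnerProductSpace.toDual_apply_apply, Function.comp_def] using hF.comp_hasDerivAt t hc

lemma grad_lower (g : E → ℝ) (G : E → E) (hg : ∀ z, HasGradientAt g (G z) z)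
    (hc : ConvexOn ℝ Set.univ g) (a b : E) :
    g a + ⟪G a, b - a⟫ ≤ g b := by
  have hφc : ConvexOn ℝ Set.univ (fun s : ℝ => g (a + s • (b - a))) := by
    have h := hc.comp_affineMap (AffineMap.lineMap a b)
    have he : (fun s : ℝ => g (a + s • (b - a))) = g ∘ (AffineMap.lineMap a b) := by
      funext s
      simp [AffineMap.lineMap_apply, vsub_eq_sub, vadd_eq_add, add_comm]
    rw [he]
    simpa using h
  have hd : HasDerivAt (fun s : ℝ => g (a + s • (b - a))) ⟪G a, b - a⟫ 0 := by
    have := line_hasDerivAt g G hg a b 0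
    simpa using this
  have hs := hφc.le_slope_of_hasDerivAt (Set.mem_univ (0:ℝ)) (Set.mem_univ (1:ℝ)) one_pos hd
  simp only [slope_def_field] at hs
  have h0 : a + (0:ℝ) • (b - a) = a := by simp
  have h1 : a + (1:ℝ) • (b - a) = b := by simp
  rw [h0, h1] at hs
  have : ⟪G a, b - a⟫ ≤ g b - g a := by
    simpa [div_one] using hs
  linarith

lemma grad_descent (g : E → ℝ) (G : E → E) (hg : ∀ z, HasGradientAt g (G z) z)
    (L : ℝ) (hL : 0 < L) (hlip : ∀ p q : E, ‖G p - G q‖ ≤ L * ‖p - q‖)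
    (a b : E) : g b ≤ g a + ⟪G a, b - a⟫ + L / 2 * ‖b - a‖ ^ 2 := by
  set ψ : ℝ → ℝ := fun t =>
    g (a + t • (b - a)) - t * ⟪G a, b - a⟫ - L * t ^ 2 / 2 * ‖b - a‖ ^ 2 with hψ
  have hd : ∀ t : ℝ, HasDerivAt ψ
      (⟪G (a + t • (b - a)), b - a⟫ - ⟪G a, b - a⟫ - L * t * ‖b - a‖ ^ 2) t := by
    intro t
    have h1 := line_hasDerivAt g G hg a b t
    have h2 : HasDerivAt (fun t : ℝ => t * ⟪G a, b - a⟫) ⟪G a, b - a⟫ t := by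
      simpa using (hasDerivAt_id t).mul_const ⟪G a, b - a⟫
    have h3 : HasDerivAt (fun t : ℝ => L * t ^ 2 / 2 * ‖b - a‖ ^ 2)
        (L * t * ‖b - a‖ ^ 2) t := by
      have := ((hasDerivAt_pow 2 t).const_mul L).div_const 2
      have h4 := this.mul_const (‖b - a‖ ^ 2)
      exact h4.congr_deriv (by push_cast; ring)
    exact (h1.sub h2).sub h3
  have hder : ∀ t ∈ Set.Ioo (0:ℝ) 1, deriv ψ t ≤ 0 := by
    intro t ht
    rw [(hd t).deriv]
    have hib : ⟪G (a + t • (b - a)) - G a, b - a⟫ ≤ L * t * ‖b - a‖ ^ 2 := by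
      calc ⟪G (a + t • (b - a)) - G a, b - a⟫ ≤ ‖G (a + t • (b - a)) - G a‖ * ‖b - a‖ :=
            real_inner_le_norm _ _
        _ ≤ (L * ‖(a + t • (b - a)) - a‖) * ‖b - a‖ := by
            apply mul_le_mul_of_nonneg_right (hlip _ _) (norm_nonneg _)
        _ = L * t * ‖b - a‖ ^ 2 := by
            rw [add_sub_cancel_left, norm_smul]
            simp [abs_of_pos ht.1]
            ring
    rw [inner_sub_left] at hib
    linarith
  have hanti : AntitoneOn ψ (Set.Icc 0 1) := by
    apply antitoneOn_of_deriv_nonpos (convex_Icc 0 1)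
    · exact fun t _ => ((hd t).differentiableAt).continuousAt.continuousWithinAt
    · intro t _
      exact ((hd t).differentiableAt).differentiableWithinAt
    · intro t ht
      exact hder t (by simpa using ht)
  have h01 := hanti (Set.mem_Icc.mpr ⟨le_refl 0, zero_le_one⟩)
    (Set.mem_Icc.mpr ⟨zero_le_one, le_refl 1⟩) zero_le_one
  simp only [hψ, zero_smul, add_zero, one_smul, add_sub_cancel, zero_mul, zero_pow,
    mul_zero, sub_zero, one_pow, mul_one] at h01
  linarith

lemma grad_sq_le (g : E → ℝ) (G : E → E) (hg : ∀ z, HasGradientAt g (G z) z)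
    (hc : ConvexOn ℝ Set.univ g)
    (L : ℝ) (hL : 0 < L) (hlip : ∀ p q : E, ‖G p - G q‖ ≤ L * ‖p - q‖)
    (a b : E) : ‖G a - G b‖ ^ 2 ≤ 2 * L * (g a - g b - ⟪G b, a - b⟫) := by
  set u : E := G a - G b with hu
  set z : E := a - (1 / L) • u with hz
  have h1 : g b + ⟪G b, z - b⟫ ≤ g z := grad_lower g G hg hc b z
  have h2 : g z ≤ g a + ⟪G a, z - a⟫ + L / 2 * ‖z - a‖ ^ 2 :=
    grad_descent g G hg L hL hlip a z
  have hza : z - a = -((1 / L) • u) := by rw [hz]; abel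
  have hzb : z - b = (a - b) - (1 / L) • u := by rw [hz]; abel
  have e1 : ⟪G a, z - a⟫ = -(1 / L * ⟪G a, u⟫) := by
    rw [hza, inner_neg_right, real_inner_smul_right]
  have e2 : ‖z - a‖ ^ 2 = (1 / L) ^ 2 * ‖u‖ ^ 2 := by
    rw [hza, norm_neg, norm_smul, Real.norm_eq_abs, abs_of_pos (by positivity : (0:ℝ) < 1 / L)]
    ring
  have e3 : ⟪G b, z - b⟫ = ⟪G b, a - b⟫ - 1 / L * ⟪G b, u⟫ := by
    rw [hzb, inner_sub_right, real_inner_smul_right]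
  have e4 : ⟪G a, u⟫ - ⟪G b, u⟫ = ‖u‖ ^ 2 := by
    rw [← inner_sub_left, ← hu, real_inner_self_eq_norm_sq]
  rw [e1, e2] at h2
  rw [e3] at h1
  have e5 : 1 / L * ⟪G a, u⟫ - 1 / L * ⟪G b, u⟫ = 1 / L * ‖u‖ ^ 2 := by
    rw [← mul_sub, e4]
  have h8 : 1 / L * ‖u‖ ^ 2 - L / 2 * ((1 / L) ^ 2 * ‖u‖ ^ 2) = ‖u‖ ^ 2 / (2 * L) := by
    field_simp
    ring
  have h9 : ‖u‖ ^ 2 / (2 * L) ≤ g a - g b - ⟪G b, a - b⟫ := by linarith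
  calc ‖u‖ ^ 2 = 2 * L * (‖u‖ ^ 2 / (2 * L)) := by field_simp
    _ ≤ 2 * L * (g a - g b - ⟪G b, a - b⟫) :=
        mul_le_mul_of_nonneg_left h9 (by positivity)

/-- Variance bound for the SVRG gradient estimator:
`E_i ‖v_i‖² ≤ 4L [f(x) − f(x*) + f(x̃) − f(x*)]`. -/
theorem svrg_variance_bound (d n : ℕ) (hn : 0 < n)
    (f : Fin n → EuclideanSpace ℝ (Fin d) → ℝ)
    (gradf : Fin n → EuclideanSpace ℝ (Fin d) → EuclideanSpace ℝ (Fin d))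
    (hdiff : ∀ i x, HasGradientAt (f i) (gradf i x) x)
    (hconv : ∀ i, ConvexOn ℝ Set.univ (f i))
    (L : ℝ) (hL : 0 < L)
    (hlip : ∀ i x y, ‖gradf i x - gradf i y‖ ≤ L * ‖x - y‖)
    (xstar : EuclideanSpace ℝ (Fin d))
    (hmin : ∀ x, (1 / (n : ℝ)) * ∑ i, f i xstar ≤ (1 / (n : ℝ)) * ∑ i, f i x)
    (x xtilde : EuclideanSpace ℝ (Fin d))
    (v : Fin n → EuclideanSpace ℝ (Fin d))
    (hv : ∀ i, v i = -(gradf i x - gradf i xtilde + (n : ℝ)⁻¹ • ∑ j, gradf j xtilde)) :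
    (1 / (n : ℝ)) * ∑ i, ‖v i‖ ^ 2 ≤
      4 * L * (((1 / (n : ℝ)) * ∑ i, f i x - (1 / (n : ℝ)) * ∑ i, f i xstar) +
        ((1 / (n : ℝ)) * ∑ i, f i xtilde - (1 / (n : ℝ)) * ∑ i, f i xstar)) := by
  have hn' : (0:ℝ) < (n:ℝ) := by exact_mod_cast hn
  have hnne : (n:ℝ) ≠ 0 := ne_of_gt hn'
  -- gradient of the sum vanishes at xstar
  have hSgrad : ∀ y : (EuclideanSpace ℝ (Fin d)), HasGradientAt (fun z => ∑ i, f i z) (∑ i, gradf i y) y := by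
    intro y
    rw [hasGradientAt_iff_hasFDerivAt]
    have h : HasFDerivAt (fun z => ∑ i, f i z)
        (∑ i, InnerProductSpace.toDual ℝ (EuclideanSpace ℝ (Fin d)) (gradf i y)) y :=
      HasFDerivAt.fun_sum (fun i _ => hasGradientAt_iff_hasFDerivAt.mp (hdiff i y))
    simpa [map_sum] using h
  have hzero : ∑ i, gradf i xstar = 0 := by
    have hlm : IsLocalMin (fun z : (EuclideanSpace ℝ (Fin d)) => ∑ i, f i z) xstar := by
      apply Filter.Eventually.of_forall
      intro y
      have := hmin y
      have h1n : (0:ℝ) < 1 / (n:ℝ) := by positivity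
      exact le_of_mul_le_mul_left (by simpa [mul_comm] using this) h1n
    have h0 := hlm.hasFDerivAt_eq_zero (hasGradientAt_iff_hasFDerivAt.mp (hSgrad xstar))
    exact (InnerProductSpace.toDual ℝ (EuclideanSpace ℝ (Fin d))).injective
      (by rw [h0, map_zero])
  -- abbreviations
  set a : Fin n → (EuclideanSpace ℝ (Fin d)) := fun i => gradf i x - gradf i xstar with ha
  set b : Fin n → (EuclideanSpace ℝ (Fin d)) := fun i => gradf i xtilde - gradf i xstar with hb
  set gbar : (EuclideanSpace ℝ (Fin d)) := (n : ℝ)⁻¹ • ∑ j, gradf j xtilde with hgbar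
  have hsumb : ∑ i, b i = (n : ℝ) • gbar := by
    rw [hgbar, smul_smul, mul_inv_cancel₀ hnne, one_smul, hb]
    rw [Finset.sum_sub_distrib, hzero, sub_zero]
  -- pointwise bound on ‖v i‖²
  have h1 : ∀ i, ‖v i‖ ^ 2 ≤ 2 * ‖a i‖ ^ 2 + 2 * ‖b i - gbar‖ ^ 2 := by
    intro i
    have hvi : v i = -(a i + (gbar - b i)) := by
      rw [hv i, ha, hb, hgbar]
      module
    rw [hvi, norm_neg]
    have hexp := norm_add_sq_real (a i) (gbar - b i)
    have hip := real_inner_le_norm (a i) (gbar - b i)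
    have h2 : ‖gbar - b i‖ = ‖b i - gbar‖ := norm_sub_rev _ _
    nlinarith [sq_nonneg (‖a i‖ - ‖gbar - b i‖), norm_nonneg (a i), norm_nonneg (gbar - b i)]
  -- variance reduction
  have h2 : ∑ i, ‖b i - gbar‖ ^ 2 ≤ ∑ i, ‖b i‖ ^ 2 := by
    have hexp : ∀ i : Fin n, ‖b i - gbar‖ ^ 2 = ‖b i‖ ^ 2 - 2 * ⟪b i, gbar⟫ + ‖gbar‖ ^ 2 :=
      fun i => norm_sub_sq_real _ _
    rw [Finset.sum_congr rfl (fun i _ => hexp i)]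
    rw [Finset.sum_add_distrib, Finset.sum_sub_distrib]
    have hinner : ∑ i, 2 * ⟪b i, gbar⟫ = 2 * ((n:ℝ) * ‖gbar‖ ^ 2) := by
      rw [← Finset.mul_sum, ← sum_inner, hsumb, real_inner_smul_left,
        real_inner_self_eq_norm_sq]
    rw [hinner]
    simp only [Finset.sum_const, Finset.card_univ, Fintype.card_fin, nsmul_eq_mul]
    nlinarith [sq_nonneg ‖gbar‖, hn']
  -- smoothness+convexity bounds
  have key : ∀ (y : (EuclideanSpace ℝ (Fin d))), ∑ i, ‖gradf i y - gradf i xstar‖ ^ 2 ≤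
      2 * L * (∑ i, f i y - ∑ i, f i xstar) := by
    intro y
    have hs : ∀ i : Fin n, ‖gradf i y - gradf i xstar‖ ^ 2 ≤
        2 * L * (f i y - f i xstar - ⟪gradf i xstar, y - xstar⟫) := fun i =>
      grad_sq_le (f i) (gradf i) (hdiff i) (hconv i) L hL (hlip i) y xstar
    calc ∑ i, ‖gradf i y - gradf i xstar‖ ^ 2
        ≤ ∑ i, 2 * L * (f i y - f i xstar - ⟪gradf i xstar, y - xstar⟫) :=
          Finset.sum_le_sum (fun i _ => hs i)
      _ = 2 * L * (∑ i, f i y - ∑ i, f i xstar - ⟪∑ i, gradf i xstar, y - xstar⟫) := by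
          rw [← Finset.mul_sum, Finset.sum_sub_distrib, Finset.sum_sub_distrib, sum_inner]
      _ = 2 * L * (∑ i, f i y - ∑ i, f i xstar) := by
          rw [hzero, inner_zero_left]
          ring
  have ha' : ∑ i, ‖a i‖ ^ 2 ≤ 2 * L * (∑ i, f i x - ∑ i, f i xstar) := key x
  have hb' : ∑ i, ‖b i‖ ^ 2 ≤ 2 * L * (∑ i, f i xtilde - ∑ i, f i xstar) := key xtilde
  have hsum : ∑ i, ‖v i‖ ^ 2 ≤ 2 * ∑ i, ‖a i‖ ^ 2 + 2 * ∑ i, ‖b i - gbar‖ ^ 2 := by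
    calc ∑ i, ‖v i‖ ^ 2 ≤ ∑ i, (2 * ‖a i‖ ^ 2 + 2 * ‖b i - gbar‖ ^ 2) :=
          Finset.sum_le_sum (fun i _ => h1 i)
      _ = 2 * ∑ i, ‖a i‖ ^ 2 + 2 * ∑ i, ‖b i - gbar‖ ^ 2 := by
          rw [Finset.sum_add_distrib, Finset.mul_sum, Finset.mul_sum]
  have hfinal : ∑ i, ‖v i‖ ^ 2 ≤
      4 * L * ((∑ i, f i x - ∑ i, f i xstar) + (∑ i, f i xtilde - ∑ i, f i xstar)) := by
    nlinarith
  have h1n : (0:ℝ) ≤ 1 / (n:ℝ) := by positivity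
  calc (1 / (n : ℝ)) * ∑ i, ‖v i‖ ^ 2
      ≤ (1 / (n : ℝ)) * (4 * L * ((∑ i, f i x - ∑ i, f i xstar) +
          (∑ i, f i xtilde - ∑ i, f i xstar))) := mul_le_mul_of_nonneg_left hfinal h1n
    _ = 4 * L * (((1 / (n : ℝ)) * ∑ i, f i x - (1 / (n : ℝ)) * ∑ i, f i xstar) +
        ((1 / (n : ℝ)) * ∑ i, f i xtilde - (1 / (n : ℝ)) * ∑ i, f i xstar)) := by ring
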